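/- Let π ∈ S_{m,n} be decreasing, i.e. π(1) > π(2) > … > π(m). Then E_π is the linear subspace E_π = {(X,Y) ∈ Mat_{m×n}(ℂ) × Mat_{n×m}(ℂ) : X_{ij} = 0 for all pairs (i,j) with j < π(i), and Y_{ji} = 0 for all pairs (i,j) with j > π(i)}; in particular E_π is a linear subspace of dimension m(n+1). -/

import Mathlib

open Matrix

/-- The ambient space `Mat(m,n,ℂ) × Mat(n,m,ℂ)`. -/
abbrev LUSpace (m n : ℕ) := Matrix (Fin m) (Fin n) ℂ × Matrix (Fin n) (Fin m) ℂ

/-- Lower triangular square matrix. -/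
def LowerTri {k : ℕ} (M : Matrix (Fin k) (Fin k) ℂ) : Prop := ∀ i j : Fin k, i < j → M i j = 0

/-- Upper triangular square matrix. -/
def UpperTri {k : ℕ} (M : Matrix (Fin k) (Fin k) ℂ) : Prop := ∀ i j : Fin k, j < i → M i j = 0

/-- The lower-upper scheme `E`. -/
def LU (m n : ℕ) : Set (LUSpace m n) :=
  { p | LowerTri (p.1 * p.2) ∧ UpperTri (p.2 * p.1) }

/-- The partial permutation matrix associated to `π ∈ S_{m,n}`. -/
def permMat {m n : ℕ} (π : Fin m ↪ Fin n) : Matrix (Fin m) (Fin n) ℂ :=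
  fun i j => if π i = j then 1 else 0

/-- Invertible lower triangular m×m matrices. -/
def Bminus (m : ℕ) : Set (Matrix (Fin m) (Fin m) ℂ) := { b | IsUnit b ∧ LowerTri b }

/-- Invertible upper triangular n×n matrices. -/
def Bplus (n : ℕ) : Set (Matrix (Fin n) (Fin n) ℂ) := { c | IsUnit c ∧ UpperTri c }

/-- Lower unitriangular m×m matrices. -/
def Nminus (m : ℕ) : Set (Matrix (Fin m) (Fin m) ℂ) := { b | LowerTri b ∧ ∀ i, b i i = 1 }

/-- Upper unitriangular n×n matrices. -/
def Nplus (n : ℕ) : Set (Matrix (Fin n) (Fin n) ℂ) := { c | UpperTri c ∧ ∀ j, c j j = 1 }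

/-- `E°_π`. -/
def Eopen {m n : ℕ} (π : Fin m ↪ Fin n) : Set (LUSpace m n) :=
  { p | ∃ b ∈ Nminus m, ∃ c ∈ Nplus n, ∃ s t : Fin m → ℂ,
      (∀ i, s i * t i ≠ 0) ∧ (∀ i i' : Fin m, i ≠ i' → s i * t i ≠ s i' * t i') ∧
      p.1 = b * (Matrix.diagonal s * permMat π) * c⁻¹ ∧
      p.2 = c * ((permMat π)ᵀ * Matrix.diagonal t) * b⁻¹ }

/-- Coordinates of a point of `LUSpace` as a function on the variable-index type. -/
def coordsOf {m n : ℕ} (p : LUSpace m n) : (Fin m × Fin n) ⊕ (Fin n × Fin m) → ℂ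
  | .inl ij => p.1 ij.1 ij.2
  | .inr ji => p.2 ji.1 ji.2

/-- Zariski closure of a subset of `LUSpace m n`: the common zero set of all polynomials
vanishing identically on the subset. -/
def zclosure {m n : ℕ} (S : Set (LUSpace m n)) : Set (LUSpace m n) :=
  { p | ∀ f : MvPolynomial ((Fin m × Fin n) ⊕ (Fin n × Fin m)) ℂ,
      (∀ q ∈ S, MvPolynomial.eval (coordsOf q) f = 0) → MvPolynomial.eval (coordsOf p) f = 0 }

/-- `E_π`, the Zariski closure of `E°_π`. -/
def Ecomp {m n : ℕ} (π : Fin m ↪ Fin n) : Set (LUSpace m n) := zclosure (Eopen π)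

/-- Zariski closure in the matrix space `Mat(m,n,ℂ)`. -/
def mzclosure {m n : ℕ} (S : Set (Matrix (Fin m) (Fin n) ℂ)) : Set (Matrix (Fin m) (Fin n) ℂ) :=
  { X | ∀ f : MvPolynomial (Fin m × Fin n) ℂ,
      (∀ Y ∈ S, MvPolynomial.eval (fun ij => Y ij.1 ij.2) f = 0) →
        MvPolynomial.eval (fun ij => X ij.1 ij.2) f = 0 }

/-- The linear subspace `{(X,Y) : X_{ij} = 0 for j < π(i), Y_{ji} = 0 for j > π(i)}`. -/
noncomputable def linSubspace {m n : ℕ} (π : Fin m ↪ Fin n) : Submodule ℂ (LUSpace m n) where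
  carrier := { p | (∀ (i : Fin m) (j : Fin n), j < π i → p.1 i j = 0) ∧
      (∀ (i : Fin m) (j : Fin n), π i < j → p.2 j i = 0) }
  add_mem' := by
    rintro a b ⟨ha1, ha2⟩ ⟨hb1, hb2⟩
    constructor
    · intro i j h
      show a.1 i j + b.1 i j = 0
      rw [ha1 i j h, hb1 i j h, add_zero]
    · intro i j h
      show a.2 j i + b.2 j i = 0
      rw [ha2 i j h, hb2 i j h, add_zero]
  zero_mem' := ⟨fun _ _ _ => rfl, fun _ _ _ => rfl⟩
  smul_mem' := by
    rintro c a ⟨ha1, ha2⟩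
    constructor
    · intro i j h
      show c * a.1 i j = 0
      rw [ha1 i j h, mul_zero]
    · intro i j h
      show c * a.2 j i = 0
      rw [ha2 i j h, mul_zero]


section TriHelpers

variable {k : ℕ} {M : Matrix (Fin k) (Fin k) ℂ}

lemma lowerTri_det (h : LowerTri M) : M.det = ∏ i, M i i :=
  Matrix.det_of_lowerTriangular M (fun i j hij => h i j (OrderDual.toDual_lt_toDual.mp hij))

lemma upperTri_det (h : UpperTri M) : M.det = ∏ i, M i i :=
  Matrix.det_of_upperTriangular (fun i j hij => h i j hij)

lemma lowerTri_isUnit (h : LowerTri M) (hd : ∀ i, M i i = 1) : IsUnit M :=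
  (Matrix.isUnit_iff_isUnit_det M).2 (by rw [lowerTri_det h]; simp [hd])

lemma upperTri_isUnit (h : UpperTri M) (hd : ∀ i, M i i = 1) : IsUnit M :=
  (Matrix.isUnit_iff_isUnit_det M).2 (by rw [upperTri_det h]; simp [hd])

lemma lowerTri_inv (h : LowerTri M) (hu : IsUnit M) : LowerTri M⁻¹ := by
  haveI := M.invertibleOfIsUnitDet ((Matrix.isUnit_iff_isUnit_det M).1 hu)
  intro i j hij
  exact Matrix.blockTriangular_inv_of_blockTriangular
    (fun a b hab => h a b (OrderDual.toDual_lt_toDual.mp hab))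
    (OrderDual.toDual_lt_toDual.mpr hij)

lemma upperTri_inv (h : UpperTri M) (hu : IsUnit M) : UpperTri M⁻¹ := by
  haveI := M.invertibleOfIsUnitDet ((Matrix.isUnit_iff_isUnit_det M).1 hu)
  intro i j hij
  exact Matrix.blockTriangular_inv_of_blockTriangular (b := id) (fun a b hab => h a b hab) hij

end TriHelpers

section Part1

variable {m n : ℕ} {π : Fin m ↪ Fin n}

lemma eopen_subset_lin (hdec : ∀ i i' : Fin m, i < i' → π i' < π i) :
    Eopen π ⊆ (linSubspace π : Set (LUSpace m n)) := by
  rintro ⟨X, Y⟩ ⟨b, ⟨hbl, hbd⟩, c, ⟨hcu, hcd⟩, s, t, hst, hdist, hXeq, hYeq⟩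
  have hbu : IsUnit b := lowerTri_isUnit hbl hbd
  have hcu' : IsUnit c := upperTri_isUnit hcu hcd
  have hbinv : LowerTri b⁻¹ := lowerTri_inv hbl hbu
  have hcinv : UpperTri c⁻¹ := upperTri_inv hcu hcu'
  constructor
  · intro i j hj
    show X i j = 0
    rw [show X = b * (Matrix.diagonal s * permMat π) * c⁻¹ from hXeq, Matrix.mul_apply]
    apply Finset.sum_eq_zero
    intro l _
    rw [Matrix.mul_apply, Finset.sum_mul]
    apply Finset.sum_eq_zero
    intro r _
    rw [Matrix.diagonal_mul]
    show b i r * (s r * permMat π r l) * (c⁻¹) l j = 0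
    unfold permMat
    by_cases hπ : π r = l
    · rcases lt_or_ge i r with hir | hir
      · rw [hbl i r hir]; ring
      · have hπi : π i ≤ π r := by
          rcases lt_or_eq_of_le hir with h | h
          · exact le_of_lt (hdec r i h)
          · rw [h]
        have : j < l := lt_of_lt_of_le hj (hπ ▸ hπi)
        rw [hcinv l j this]; ring
    · simp [hπ]
  · intro i j hj
    show Y j i = 0
    rw [show Y = c * ((permMat π)ᵀ * Matrix.diagonal t) * b⁻¹ from hYeq, Matrix.mul_apply]
    apply Finset.sum_eq_zero
    intro r _
    rw [Matrix.mul_apply, Finset.sum_mul]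
    apply Finset.sum_eq_zero
    intro l _
    rw [Matrix.mul_diagonal]
    show c j l * ((permMat π)ᵀ l r * t r) * (b⁻¹) r i = 0
    unfold permMat Matrix.transpose
    by_cases hπ : π r = l
    · rcases lt_or_ge r i with hri | hri
      · rw [hbinv r i hri]; ring
      · have hπr : π r ≤ π i := by
          rcases lt_or_eq_of_le hri with h | h
          · exact le_of_lt (hdec i r h)
          · rw [h]
        have : l < j := lt_of_le_of_lt (hπ ▸ hπr) hj
        rw [hcu j l this]; ring
    · simp [hπ]

end Part1

noncomputable def bRec {m : ℕ} (A : Matrix (Fin m) (Fin m) ℂ) (d : Fin m → ℂ) (i : Fin m) : ℕ → ℂ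
  | k =>
    if h : k < m then
      if k < (i : ℕ) then 0
      else if k = (i : ℕ) then 1
      else (d i - d ⟨k, h⟩)⁻¹ *
        ∑ j : Fin m, if hj : (j : ℕ) < k then A ⟨k, h⟩ j * bRec A d i j else 0
    else 0
  termination_by k => k
  decreasing_by exact hj

lemma bRec_lt {m : ℕ} (A : Matrix (Fin m) (Fin m) ℂ) (d : Fin m → ℂ) {i k : Fin m}
    (h : (k : ℕ) < (i : ℕ)) : bRec A d i (k : ℕ) = 0 := by
  rw [bRec]; simp [k.isLt, h]

lemma bRec_self {m : ℕ} (A : Matrix (Fin m) (Fin m) ℂ) (d : Fin m → ℂ) (i : Fin m) :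
    bRec A d i (i : ℕ) = 1 := by
  rw [bRec]; simp [i.isLt]

lemma bRec_gt {m : ℕ} (A : Matrix (Fin m) (Fin m) ℂ) (d : Fin m → ℂ) {i k : Fin m}
    (h : (i : ℕ) < (k : ℕ)) :
    bRec A d i (k : ℕ) = (d i - d k)⁻¹ *
      ∑ j : Fin m, if (j : ℕ) < (k : ℕ) then A k j * bRec A d i (j : ℕ) else 0 := by
  rw [bRec]
  simp only [k.isLt, dite_true, Fin.eta, dif_pos]
  rw [if_neg (by omega), if_neg (by omega)]
  simp only [dite_eq_ite]

noncomputable def bMat {m : ℕ} (A : Matrix (Fin m) (Fin m) ℂ) (d : Fin m → ℂ) :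
    Matrix (Fin m) (Fin m) ℂ := Matrix.of fun k i => bRec A d i (k : ℕ)

lemma bMat_lower {m : ℕ} (A : Matrix (Fin m) (Fin m) ℂ) (d : Fin m → ℂ) :
    LowerTri (bMat A d) := fun k i h => bRec_lt A d (by exact_mod_cast h)

lemma bMat_diag {m : ℕ} (A : Matrix (Fin m) (Fin m) ℂ) (d : Fin m → ℂ) (i : Fin m) :
    bMat A d i i = 1 := bRec_self A d i

lemma bMat_conj {m : ℕ} {A : Matrix (Fin m) (Fin m) ℂ} {d : Fin m → ℂ}
    (hA : LowerTri A) (hAd : ∀ i, A i i = d i)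
    (hdd : ∀ i k : Fin m, i ≠ k → d i ≠ d k) :
    A * bMat A d = bMat A d * Matrix.diagonal d := by
  ext k i
  rw [Matrix.mul_apply, Matrix.mul_diagonal]
  have hterm : ∀ j : Fin m, A k j * bMat A d j i =
      (if (j : ℕ) < (k : ℕ) then A k j * bRec A d i (j : ℕ) else 0)
      + (if j = k then d k * bRec A d i (k : ℕ) else 0) := by
    intro j
    rcases lt_trichotomy (j : ℕ) (k : ℕ) with hj | hj | hj
    · rw [if_pos hj, if_neg (by intro h; subst h; omega), add_zero]; rfl
    · have : j = k := Fin.ext hj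
      subst this
      rw [if_neg (by omega), if_pos rfl, zero_add, bMat, Matrix.of_apply, hAd]
    · rw [if_neg (by omega), if_neg (by intro h; subst h; omega), add_zero,
        hA k j (by exact_mod_cast hj), zero_mul]
  rw [Finset.sum_congr rfl (fun j _ => hterm j), Finset.sum_add_distrib,
    Finset.sum_ite_eq' Finset.univ k (fun _ => d k * bRec A d i (k : ℕ))]
  simp only [Finset.mem_univ, if_pos]
  rcases lt_trichotomy (k : ℕ) (i : ℕ) with hk | hk | hk
  · have h1 : bRec A d i (k : ℕ) = 0 := bRec_lt A d hk
    have h2 : ∀ j : Fin m, (if (j : ℕ) < (k : ℕ) then A k j * bRec A d i (j : ℕ) else 0) = 0 := by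
      intro j
      split
      · rw [bRec_lt A d (by omega), mul_zero]
      · rfl
    rw [Finset.sum_eq_zero (fun j _ => h2 j), show bMat A d k i = bRec A d i (k : ℕ) from rfl, h1]
    ring
  · have : k = i := Fin.ext hk
    subst this
    have h2 : ∀ j : Fin m, (if (j : ℕ) < (k : ℕ) then A k j * bRec A d k (j : ℕ) else 0) = 0 := by
      intro j
      split
      · rw [bRec_lt A d (by omega), mul_zero]
      · rfl
    rw [Finset.sum_eq_zero (fun j _ => h2 j), bRec_self]
    show (0 : ℂ) + d k * 1 = bMat A d k k * d k
    rw [bMat_diag]; ring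
  · have hne : d i - d k ≠ 0 := sub_ne_zero.2 (hdd i k (by intro h; subst h; omega))
    have hb := bRec_gt A d hk
    show (∑ j : Fin m, if (j : ℕ) < (k : ℕ) then A k j * bRec A d i (j : ℕ) else 0)
        + d k * bRec A d i (k : ℕ) = bRec A d i (k : ℕ) * d i
    rw [hb]
    field_simp
    ring

noncomputable def wRec {m n : ℕ} (X : Matrix (Fin m) (Fin n) ℂ) (π : Fin m ↪ Fin n)
    (l : Fin n) : ℕ → ℂ
  | i =>
    if h : i < m then
      -(X ⟨i, h⟩ l + ∑ i' : Fin m,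
          if hi' : (i' : ℕ) < i then X ⟨i, h⟩ (π i') * wRec X π l i' else 0)
        / X ⟨i, h⟩ (π ⟨i, h⟩)
    else 0
  termination_by i => i
  decreasing_by exact hi'

lemma wRec_eq {m n : ℕ} (X : Matrix (Fin m) (Fin n) ℂ) (π : Fin m ↪ Fin n) (l : Fin n)
    (i : Fin m) :
    wRec X π l (i : ℕ) =
      -(X i l + ∑ i' : Fin m,
          if (i' : ℕ) < (i : ℕ) then X i (π i') * wRec X π l (i' : ℕ) else 0) / X i (π i) := by
  rw [wRec]
  simp only [i.isLt, dif_pos, Fin.eta, dite_eq_ite]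

lemma wRec_zero {m n : ℕ} {X : Matrix (Fin m) (Fin n) ℂ} {π : Fin m ↪ Fin n} {l : Fin n}
    (hX : ∀ (i : Fin m) (j : Fin n), j < π i → X i j = 0)
    (hdec : ∀ i i' : Fin m, i < i' → π i' < π i) :
    ∀ i : Fin m, l < π i → wRec X π l (i : ℕ) = 0 := by
  have H : ∀ N : ℕ, ∀ i : Fin m, (i : ℕ) < N → l < π i → wRec X π l (i : ℕ) = 0 := by
    intro N
    induction N with
    | zero => intro i hi; omega
    | succ N IH =>
      intro i hiN hl
      rw [wRec_eq, hX i l hl]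
      have : ∀ i' : Fin m,
          (if (i' : ℕ) < (i : ℕ) then X i (π i') * wRec X π l (i' : ℕ) else 0) = 0 := by
        intro i'
        split
        · next h =>
          rw [IH i' (by omega) (lt_trans hl (hdec i' i (by exact_mod_cast h))), mul_zero]
        · rfl
      rw [Finset.sum_eq_zero (fun j _ => this j)]
      norm_num
  exact fun i => H (m + 1) i (by omega)

lemma wRec_ker {m n : ℕ} {X : Matrix (Fin m) (Fin n) ℂ} {π : Fin m ↪ Fin n} {l : Fin n}
    (hX : ∀ (i : Fin m) (j : Fin n), j < π i → X i j = 0)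
    (hdec : ∀ i i' : Fin m, i < i' → π i' < π i)
    (hs : ∀ i, X i (π i) ≠ 0) (k : Fin m) :
    X k l + ∑ i' : Fin m, X k (π i') * wRec X π l (i' : ℕ) = 0 := by
  have hterm : ∀ i' : Fin m, X k (π i') * wRec X π l (i' : ℕ) =
      (if (i' : ℕ) < (k : ℕ) then X k (π i') * wRec X π l (i' : ℕ) else 0)
      + (if i' = k then X k (π k) * wRec X π l (k : ℕ) else 0) := by
    intro i'
    rcases lt_trichotomy (i' : ℕ) (k : ℕ) with h | h | h
    · rw [if_pos h, if_neg (by intro hh; subst hh; omega), add_zero]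
    · have : i' = k := Fin.ext h
      subst this; rw [if_neg (by omega), if_pos rfl, zero_add]
    · rw [if_neg (by omega), if_neg (by intro hh; subst hh; omega), add_zero,
        hX k (π i') (hdec k i' (by exact_mod_cast h)), zero_mul]
  rw [Finset.sum_congr rfl (fun j _ => hterm j), Finset.sum_add_distrib,
    Finset.sum_ite_eq' Finset.univ k]
  simp only [Finset.mem_univ, if_pos]
  have hwk : X k (π k) * wRec X π l (k : ℕ)
      = -(X k l + ∑ i' : Fin m,
          if (i' : ℕ) < (k : ℕ) then X k (π i') * wRec X π l (i' : ℕ) else 0) := by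
    rw [wRec_eq, mul_comm, div_mul_cancel₀ _ (hs k)]
  rw [hwk]
  ring


section Construction

variable {m n : ℕ} (π : Fin m ↪ Fin n) (X : Matrix (Fin m) (Fin n) ℂ) (Y : Matrix (Fin n) (Fin m) ℂ)

/-- The eigenvalues `d i = X_{i,π(i)} Y_{π(i),i}`. -/
noncomputable def dfun : Fin m → ℂ := fun i => X i (π i) * Y (π i) i

/-- The lower unitriangular diagonalizer of `XY`. -/
noncomputable def bM : Matrix (Fin m) (Fin m) ℂ := bMat (X * Y) (dfun π X Y)

/-- The upper unitriangular matrix `c`. -/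
noncomputable def cM : Matrix (Fin n) (Fin n) ℂ :=
  Matrix.of fun k l =>
    (∑ i : Fin m, if π i = l then (Y * bM π X Y) k i * (Y (π i) i)⁻¹ else 0)
    + (if ∀ i : Fin m, π i ≠ l then
        (if k = l then 1 else 0) + ∑ i' : Fin m, if π i' = k then wRec X π l (i' : ℕ) else 0
      else 0)

variable {π X Y}

variable (hdec : ∀ i i' : Fin m, i < i' → π i' < π i)
  (hX : ∀ (i : Fin m) (j : Fin n), j < π i → X i j = 0)
  (hY : ∀ (i : Fin m) (j : Fin n), π i < j → Y j i = 0)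
  (hd0 : ∀ i, dfun π X Y i ≠ 0)
  (hdd : ∀ i i' : Fin m, i ≠ i' → dfun π X Y i ≠ dfun π X Y i')

section

include hX hY

include hdec in
lemma XY_lower : LowerTri (X * Y) := by
  intro i i' h
  rw [Matrix.mul_apply]
  apply Finset.sum_eq_zero
  intro j _
  rcases lt_or_ge j (π i) with hj | hj
  · rw [hX i j hj, zero_mul]
  · have : π i' < j := lt_of_lt_of_le (hdec i i' h) hj
    rw [hY i' j this, mul_zero]

lemma XY_diag (i : Fin m) : (X * Y) i i = dfun π X Y i := by
  rw [Matrix.mul_apply, Finset.sum_eq_single (π i)]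
  · rfl
  · intro j _ hj
    rcases lt_or_ge j (π i) with h | h
    · rw [hX i j h, zero_mul]
    · rw [hY i j (lt_of_le_of_ne h (Ne.symm hj)), mul_zero]
  · intro h
    exact absurd (Finset.mem_univ _) h

end

include hdec hY in
lemma Yb_upper : ∀ (k : Fin n) (i : Fin m), π i < k → (Y * bM π X Y) k i = 0 := by
  intro k i hk
  rw [Matrix.mul_apply]
  apply Finset.sum_eq_zero
  intro i' _
  rcases lt_or_ge (i' : ℕ) (i : ℕ) with h | h
  · rw [show bM π X Y i' i = 0 from bRec_lt _ _ h, mul_zero]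
  · have hπ : π i' ≤ π i := by
      rcases lt_or_eq_of_le h with h' | h'
      · exact le_of_lt (hdec i i' (by exact_mod_cast h'))
      · rw [Fin.ext h']
    rw [hY i' k (lt_of_le_of_lt hπ hk), zero_mul]

include hdec hY in
lemma Yb_diag (i : Fin m) :
    (Y * bM π X Y) (π i) i = Y (π i) i := by
  rw [Matrix.mul_apply, Finset.sum_eq_single i]
  · rw [show bM π X Y i i = 1 from bRec_self _ _ i, mul_one]
  · intro i' _ hi'
    rcases lt_or_ge (i' : ℕ) (i : ℕ) with h | h
    · rw [show bM π X Y i' i = 0 from bRec_lt _ _ h, mul_zero]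
    · have h' : (i : ℕ) < (i' : ℕ) := by
        rcases lt_or_eq_of_le h with h' | h'
        · exact h'
        · exact absurd (Fin.ext h').symm hi'
      rw [hY i' (π i) (hdec i i' (by exact_mod_cast h')), zero_mul]
  · intro h
    exact absurd (Finset.mem_univ _) h

end Construction

section Construction2

variable {m n : ℕ} {π : Fin m ↪ Fin n} {X : Matrix (Fin m) (Fin n) ℂ} {Y : Matrix (Fin n) (Fin m) ℂ}

variable (hdec : ∀ i i' : Fin m, i < i' → π i' < π i)
  (hX : ∀ (i : Fin m) (j : Fin n), j < π i → X i j = 0)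
  (hY : ∀ (i : Fin m) (j : Fin n), π i < j → Y j i = 0)
  (hd0 : ∀ i, dfun π X Y i ≠ 0)
  (hdd : ∀ i i' : Fin m, i ≠ i' → dfun π X Y i ≠ dfun π X Y i')

include hdec hX hY hd0

lemma cM_upper : UpperTri (cM π X Y) := by
  intro k l hlk
  show (∑ i : Fin m, if π i = l then (Y * bM π X Y) k i * (Y (π i) i)⁻¹ else 0)
      + (if ∀ i : Fin m, π i ≠ l then
          (if k = l then 1 else 0) + ∑ i' : Fin m, if π i' = k then wRec X π l (i' : ℕ) else 0
        else 0) = 0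
  have h1 : ∀ i : Fin m, (if π i = l then (Y * bM π X Y) k i * (Y (π i) i)⁻¹ else 0) = 0 := by
    intro i
    split
    · next h => rw [Yb_upper hdec hY k i (h ▸ hlk), zero_mul]
    · rfl
  rw [Finset.sum_eq_zero (fun i _ => h1 i)]
  have h2 : (if ∀ i : Fin m, π i ≠ l then
      (if k = l then 1 else 0) + ∑ i' : Fin m, if π i' = k then wRec X π l (i' : ℕ) else 0
    else 0) = 0 := by
    split
    · rw [if_neg (by exact fun h => absurd h (ne_of_gt hlk))]
      rw [Finset.sum_eq_zero, zero_add]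
      intro i' _
      split
      · next h => rw [wRec_zero hX hdec i' (h ▸ hlk)]
      · rfl
    · rfl
  rw [h2, add_zero]

lemma cM_diag : ∀ l, cM π X Y l l = 1 := by
  intro l
  show (∑ i : Fin m, if π i = l then (Y * bM π X Y) l i * (Y (π i) i)⁻¹ else 0)
      + (if ∀ i : Fin m, π i ≠ l then
          (if l = l then 1 else 0) + ∑ i' : Fin m, if π i' = l then wRec X π l (i' : ℕ) else 0
        else 0) = 1
  by_cases hl : ∀ i : Fin m, π i ≠ l
  · rw [if_pos hl, Finset.sum_eq_zero (fun i _ => if_neg (hl i)),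
      Finset.sum_eq_zero (fun i _ => if_neg (hl i)), if_pos rfl, add_zero, zero_add]
  · push_neg at hl
    obtain ⟨i₀, hi₀⟩ := hl
    rw [if_neg (by push_neg; exact ⟨i₀, hi₀⟩), add_zero,
      Finset.sum_eq_single i₀]
    · rw [if_pos hi₀, ← hi₀, Yb_diag hdec hY i₀,
        mul_inv_cancel₀ (right_ne_zero_of_mul (hd0 i₀))]
    · intro i _ hi
      rw [if_neg (fun h => hi (π.injective (h.trans hi₀.symm)))]
    · intro h
      exact absurd (Finset.mem_univ _) h

include hdd in
lemma Xc_eq : X * cM π X Y =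
    bM π X Y * (Matrix.diagonal (fun i => X i (π i)) * permMat π) := by
  have hAb : (X * Y) * bM π X Y = bM π X Y * Matrix.diagonal (dfun π X Y) :=
    bMat_conj (XY_lower hdec hX hY) (XY_diag hX hY) hdd
  ext k l
  have hRHS : (bM π X Y * (Matrix.diagonal (fun i => X i (π i)) * permMat π)) k l
      = ∑ i : Fin m, if π i = l then bM π X Y k i * X i (π i) else 0 := by
    rw [Matrix.mul_apply]
    apply Finset.sum_congr rfl
    intro i _
    rw [Matrix.diagonal_mul]
    by_cases h : π i = l <;> simp [permMat, h]
  rw [Matrix.mul_apply, hRHS]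
  have expand : ∀ r : Fin n, X k r * cM π X Y r l
      = X k r * (∑ i : Fin m, if π i = l then (Y * bM π X Y) r i * (Y (π i) i)⁻¹ else 0)
      + X k r * (if ∀ i : Fin m, π i ≠ l then
          (if r = l then 1 else 0) + ∑ i' : Fin m, if π i' = r then wRec X π l (i' : ℕ) else 0
        else 0) := fun r => mul_add _ _ _
  rw [Finset.sum_congr rfl (fun r _ => expand r), Finset.sum_add_distrib]
  by_cases hl : ∀ i : Fin m, π i ≠ l
  · have h1 : ∀ r : Fin n, X k r
        * (∑ i : Fin m, if π i = l then (Y * bM π X Y) r i * (Y (π i) i)⁻¹ else 0) = 0 := by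
      intro r
      rw [Finset.sum_eq_zero (fun i _ => if_neg (hl i)), mul_zero]
    rw [Finset.sum_eq_zero (fun r _ => h1 r), zero_add]
    have h2 : ∀ r : Fin n, X k r * (if ∀ i : Fin m, π i ≠ l then
          (if r = l then 1 else 0) + ∑ i' : Fin m, if π i' = r then wRec X π l (i' : ℕ) else 0
        else 0)
        = (if r = l then X k r else 0)
          + ∑ i' : Fin m, if π i' = r then X k r * wRec X π l (i' : ℕ) else 0 := by
      intro r
      rw [if_pos hl, mul_add]
      congr 1
      · by_cases h : r = l <;> simp [h]
      · rw [Finset.mul_sum]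
        apply Finset.sum_congr rfl
        intro i' _
        by_cases h : π i' = r <;> simp [h]
    rw [Finset.sum_congr rfl (fun r _ => h2 r), Finset.sum_add_distrib,
      Finset.sum_ite_eq' Finset.univ l (fun r => X k r), Finset.sum_comm]
    have h3 : ∀ i' : Fin m, (∑ r : Fin n, if π i' = r then X k r * wRec X π l (i' : ℕ) else 0)
        = X k (π i') * wRec X π l (i' : ℕ) := by
      intro i'
      rw [Finset.sum_ite_eq Finset.univ (π i'), if_pos (Finset.mem_univ _)]
    rw [Finset.sum_congr rfl (fun i' _ => h3 i')]
    simp only [Finset.mem_univ, if_pos]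
    rw [Finset.sum_eq_zero (fun i _ => if_neg (hl i))]
    exact wRec_ker hX hdec (fun i => left_ne_zero_of_mul (hd0 i)) k
  · push_neg at hl
    obtain ⟨i₀, hi₀⟩ := hl
    subst hi₀
    have h2 : ∀ r : Fin n, X k r * (if ∀ i : Fin m, π i ≠ π i₀ then
          (if r = π i₀ then 1 else 0)
            + ∑ i' : Fin m, if π i' = r then wRec X π (π i₀) (i' : ℕ) else 0
        else 0) = 0 := by
      intro r
      rw [if_neg (by push_neg; exact ⟨i₀, rfl⟩), mul_zero]
    rw [Finset.sum_eq_zero (fun r _ => h2 r), add_zero]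
    have h1 : ∀ r : Fin n,
        (∑ i : Fin m, if π i = π i₀ then (Y * bM π X Y) r i * (Y (π i) i)⁻¹ else 0)
        = (Y * bM π X Y) r i₀ * (Y (π i₀) i₀)⁻¹ := by
      intro r
      rw [Finset.sum_eq_single i₀, if_pos rfl]
      · intro i _ hi
        rw [if_neg (fun h => hi (π.injective h))]
      · intro h
        exact absurd (Finset.mem_univ _) h
    rw [Finset.sum_congr rfl (fun r _ => by rw [h1 r])]
    have h4 : ∑ r : Fin n, X k r * ((Y * bM π X Y) r i₀ * (Y (π i₀) i₀)⁻¹)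
        = (X * (Y * bM π X Y)) k i₀ * (Y (π i₀) i₀)⁻¹ := by
      rw [Matrix.mul_apply, Finset.sum_mul]
      apply Finset.sum_congr rfl
      intro r _
      ring
    rw [h4, ← Matrix.mul_assoc, hAb, Matrix.mul_diagonal]
    rw [Finset.sum_eq_single i₀, if_pos rfl]
    · show bM π X Y k i₀ * (X i₀ (π i₀) * Y (π i₀) i₀) * (Y (π i₀) i₀)⁻¹
        = bM π X Y k i₀ * X i₀ (π i₀)
      have ht : Y (π i₀) i₀ ≠ 0 := right_ne_zero_of_mul (hd0 i₀)
      field_simp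
    · intro i _ hi
      rw [if_neg (fun h => hi (π.injective h))]
    · intro h
      exact absurd (Finset.mem_univ _) h

lemma Yb_eq : Y * bM π X Y
    = cM π X Y * ((permMat π)ᵀ * Matrix.diagonal (fun i => Y (π i) i)) := by
  ext k i
  conv_rhs => rw [Matrix.mul_apply]
  have h0 : ∀ l : Fin n, cM π X Y k l
        * ((permMat π)ᵀ * Matrix.diagonal (fun i => Y (π i) i)) l i
      = if π i = l then cM π X Y k l * Y (π i) i else 0 := by
    intro l
    rw [Matrix.mul_diagonal]
    by_cases h : π i = l <;> simp [permMat, Matrix.transpose_apply, h]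
  rw [Finset.sum_congr rfl (fun l _ => h0 l), Finset.sum_ite_eq Finset.univ (π i),
    if_pos (Finset.mem_univ _)]
  have hc : cM π X Y k (π i) = (Y * bM π X Y) k i * (Y (π i) i)⁻¹ := by
    show (∑ i' : Fin m, if π i' = π i then (Y * bM π X Y) k i' * (Y (π i') i')⁻¹ else 0)
        + (if ∀ i' : Fin m, π i' ≠ π i then
            (if k = π i then 1 else 0)
              + ∑ i' : Fin m, if π i' = k then wRec X π (π i) (i' : ℕ) else 0
          else 0) = _
    rw [if_neg (by push_neg; exact ⟨i, rfl⟩), add_zero, Finset.sum_eq_single i, if_pos rfl]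
    · intro i' _ hi'
      rw [if_neg (fun h => hi' (π.injective h))]
    · intro h
      exact absurd (Finset.mem_univ _) h
  rw [hc, mul_assoc, inv_mul_cancel₀ (right_ne_zero_of_mul (hd0 i)), mul_one]

end Construction2

section Generic

variable {m n : ℕ} {π : Fin m ↪ Fin n}

lemma lin_generic_mem (hdec : ∀ i i' : Fin m, i < i' → π i' < π i)
    {X : Matrix (Fin m) (Fin n) ℂ} {Y : Matrix (Fin n) (Fin m) ℂ}
    (hX : ∀ (i : Fin m) (j : Fin n), j < π i → X i j = 0)
    (hY : ∀ (i : Fin m) (j : Fin n), π i < j → Y j i = 0)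
    (hd0 : ∀ i, X i (π i) * Y (π i) i ≠ 0)
    (hdd : ∀ i i' : Fin m, i ≠ i' → X i (π i) * Y (π i) i ≠ X i' (π i') * Y (π i') i') :
    ((X, Y) : LUSpace m n) ∈ Eopen π := by
  have hd0' : ∀ i, dfun π X Y i ≠ 0 := hd0
  have hdd' : ∀ i i' : Fin m, i ≠ i' → dfun π X Y i ≠ dfun π X Y i' := hdd
  have hcup : UpperTri (cM π X Y) := cM_upper hdec hX hY hd0'
  have hcdiag : ∀ l, cM π X Y l l = 1 := cM_diag hdec hX hY hd0'
  have hcunit : IsUnit (cM π X Y) := upperTri_isUnit hcup hcdiag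
  have hbunit : IsUnit (bM π X Y) := lowerTri_isUnit (bMat_lower _ _) (bMat_diag _ _)
  refine ⟨bM π X Y, ⟨bMat_lower _ _, bMat_diag _ _⟩, cM π X Y, ⟨hcup, hcdiag⟩,
    (fun i => X i (π i)), (fun i => Y (π i) i), hd0, hdd, ?_, ?_⟩
  · show X = bM π X Y * (Matrix.diagonal (fun i => X i (π i)) * permMat π) * (cM π X Y)⁻¹
    rw [← Xc_eq hdec hX hY hd0' hdd', Matrix.mul_assoc,
      Matrix.mul_nonsing_inv _ ((Matrix.isUnit_iff_isUnit_det _).1 hcunit), Matrix.mul_one]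
  · show Y = cM π X Y * ((permMat π)ᵀ * Matrix.diagonal (fun i => Y (π i) i)) * (bM π X Y)⁻¹
    rw [← Yb_eq hdec hX hY hd0', Matrix.mul_assoc,
      Matrix.mul_nonsing_inv _ ((Matrix.isUnit_iff_isUnit_det _).1 hbunit), Matrix.mul_one]

end Generic

section Closure

open MvPolynomial

variable {m n : ℕ} (π : Fin m ↪ Fin n)

/-- The "free" variables of the linear subspace. -/
def goodVar : (Fin m × Fin n) ⊕ (Fin n × Fin m) → Prop := fun v =>
  match v with
  | .inl ij => π ij.1 ≤ ij.2
  | .inr ji => ji.1 ≤ π ji.2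

instance goodVarDec : DecidablePred (goodVar π) := fun v =>
  match v with
  | .inl ij => inferInstanceAs (Decidable (π ij.1 ≤ ij.2))
  | .inr ji => inferInstanceAs (Decidable (ji.1 ≤ π ji.2))

/-- Substitution killing the constrained variables. -/
noncomputable def sigmaP : (Fin m × Fin n) ⊕ (Fin n × Fin m) →
    MvPolynomial ((Fin m × Fin n) ⊕ (Fin n × Fin m)) ℂ := fun v =>
  if goodVar π v then MvPolynomial.X v else 0

lemma eval_bind' (x : (Fin m × Fin n) ⊕ (Fin n × Fin m) → ℂ)
    (g : (Fin m × Fin n) ⊕ (Fin n × Fin m) →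
      MvPolynomial ((Fin m × Fin n) ⊕ (Fin n × Fin m)) ℂ)
    (f : MvPolynomial ((Fin m × Fin n) ⊕ (Fin n × Fin m)) ℂ) :
    eval x (bind₁ g f) = eval (fun v => eval x (g v)) f :=
  eval₂Hom_bind₁ (RingHom.id ℂ) x g f

variable {π}

lemma evalL {p : LUSpace m n} (hp : p ∈ (linSubspace π : Set (LUSpace m n)))
    (f : MvPolynomial ((Fin m × Fin n) ⊕ (Fin n × Fin m)) ℂ) :
    eval (coordsOf p) (bind₁ (sigmaP π) f) = eval (coordsOf p) f := by
  rw [eval_bind']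
  have hfun : (fun v => eval (coordsOf p) (sigmaP π v)) = coordsOf p := by
    funext v
    rcases v with ij | ji
    · simp only [sigmaP]
      split
      · simp
      · next h =>
        have hlt : ij.2 < π ij.1 := not_le.1 h
        simp only [map_zero]
        show (0 : ℂ) = coordsOf p (Sum.inl ij)
        rw [show coordsOf p (Sum.inl ij) = p.1 ij.1 ij.2 from rfl, hp.1 ij.1 ij.2 hlt]
    · simp only [sigmaP]
      split
      · simp
      · next h =>
        have hlt : π ji.2 < ji.1 := not_le.1 h
        simp only [map_zero]
        show (0 : ℂ) = coordsOf p (Sum.inr ji)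
        rw [show coordsOf p (Sum.inr ji) = p.2 ji.1 ji.2 from rfl, hp.2 ji.2 ji.1 hlt]
  rw [hfun]

lemma pointL (x : (Fin m × Fin n) ⊕ (Fin n × Fin m) → ℂ) :
    ∃ p : LUSpace m n, p ∈ (linSubspace π : Set (LUSpace m n)) ∧
      coordsOf p = fun v => if goodVar π v then x v else 0 := by
  refine ⟨((fun i j => if π i ≤ j then x (Sum.inl (i, j)) else 0 :
      Matrix (Fin m) (Fin n) ℂ),
    (fun j i => if j ≤ π i then x (Sum.inr (j, i)) else 0 : Matrix (Fin n) (Fin m) ℂ)),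
    ⟨?_, ?_⟩, ?_⟩
  · intro i j hj
    exact if_neg (not_le.2 hj)
  · intro i j hj
    exact if_neg (not_le.2 hj)
  · funext v
    rcases v with ⟨i, j⟩ | ⟨j, i⟩ <;> rfl

/-- The polynomial `d_i`. -/
noncomputable def Dpoly (π : Fin m ↪ Fin n) (i : Fin m) :
    MvPolynomial ((Fin m × Fin n) ⊕ (Fin n × Fin m)) ℂ :=
  MvPolynomial.X (Sum.inl (i, π i)) * MvPolynomial.X (Sum.inr (π i, i))

/-- The genericity polynomial. -/
noncomputable def gpoly (π : Fin m ↪ Fin n) :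
    MvPolynomial ((Fin m × Fin n) ⊕ (Fin n × Fin m)) ℂ :=
  (∏ i : Fin m, Dpoly π i) *
    ∏ q ∈ Finset.univ.offDiag, (Dpoly π q.1 - Dpoly π q.2)

lemma eval_Dpoly (p : LUSpace m n) (i : Fin m) :
    eval (coordsOf p) (Dpoly π i) = p.1 i (π i) * p.2 (π i) i := by
  simp [Dpoly]
  rfl

end Closure

section Main

open MvPolynomial

variable {m n : ℕ} {π : Fin m ↪ Fin n}

lemma ecomp_subset_lin (hdec : ∀ i i' : Fin m, i < i' → π i' < π i) :
    Ecomp π ⊆ (linSubspace π : Set (LUSpace m n)) := by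
  intro p hp
  constructor
  · intro i j hj
    have h := hp (MvPolynomial.X (Sum.inl (i, j))) (fun q hq => by
      have := (eopen_subset_lin hdec hq).1 i j hj
      simpa [coordsOf] using this)
    simpa [coordsOf] using h
  · intro i j hj
    have h := hp (MvPolynomial.X (Sum.inr (j, i))) (fun q hq => by
      have := (eopen_subset_lin hdec hq).2 i j hj
      simpa [coordsOf] using this)
    simpa [coordsOf] using h

lemma lin_subset_ecomp (hdec : ∀ i i' : Fin m, i < i' → π i' < π i) :
    (linSubspace π : Set (LUSpace m n)) ⊆ Ecomp π := by
  intro p hp f hf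
  -- Step 1: f * gpoly vanishes on the linear subspace.
  have key : ∀ q : LUSpace m n, q ∈ (linSubspace π : Set (LUSpace m n)) →
      eval (coordsOf q) (f * gpoly π) = 0 := by
    intro q hq
    by_cases hg : eval (coordsOf q) (gpoly π) = 0
    · rw [_root_.map_mul, hg, mul_zero]
    · have hd0 : ∀ i, q.1 i (π i) * q.2 (π i) i ≠ 0 := by
        intro i h
        apply hg
        rw [gpoly, _root_.map_mul]
        apply mul_eq_zero_of_left
        rw [map_prod]
        exact Finset.prod_eq_zero (Finset.mem_univ i) ((eval_Dpoly q i).trans h)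
      have hdd : ∀ i i' : Fin m, i ≠ i' →
          q.1 i (π i) * q.2 (π i) i ≠ q.1 i' (π i') * q.2 (π i') i' := by
        intro i i' hii h
        apply hg
        rw [gpoly, _root_.map_mul]
        apply mul_eq_zero_of_right
        rw [map_prod]
        refine Finset.prod_eq_zero (i := ((i, i') : Fin m × Fin m))
          (Finset.mem_offDiag.2 ⟨Finset.mem_univ i, Finset.mem_univ i', hii⟩) ?_
        rw [map_sub, eval_Dpoly, eval_Dpoly, h, sub_self]
      have hmem : q ∈ Eopen π := by
        have h := lin_generic_mem hdec hq.1 hq.2 hd0 hdd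
        rwa [Prod.mk.eta] at h
      rw [_root_.map_mul, hf q hmem, zero_mul]
  -- Step 2: the substituted polynomial vanishes identically.
  have hzero : bind₁ (sigmaP π) (f * gpoly π) = 0 := by
    apply MvPolynomial.funext
    intro x
    rw [map_zero, eval_bind']
    obtain ⟨q, hqL, hqc⟩ := pointL (π := π) x
    have hfun : (fun v => eval x (sigmaP π v)) = coordsOf q := by
      rw [hqc]
      funext v
      simp only [sigmaP]
      split <;> simp
    rw [hfun]
    exact key q hqL
  -- Step 3: the substituted gpoly is nonzero.
  have hgne : bind₁ (sigmaP π) (gpoly π) ≠ 0 := by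
    intro h0
    set q₀ : LUSpace m n :=
      ((fun i j => if π i = j then ((i : ℕ) + 1 : ℂ) else 0 : Matrix (Fin m) (Fin n) ℂ),
       (fun j i => if π i = j then 1 else 0 : Matrix (Fin n) (Fin m) ℂ)) with hq₀
    have hq₀L : q₀ ∈ (linSubspace π : Set (LUSpace m n)) := by
      constructor
      · intro i j hj
        exact if_neg (fun h => absurd (h ▸ hj) (lt_irrefl _))
      · intro i j hj
        exact if_neg (fun h => absurd (h ▸ hj) (lt_irrefl _))
    have hD : ∀ i : Fin m, eval (coordsOf q₀) (Dpoly π i) = ((i : ℕ) + 1 : ℂ) := by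
      intro i
      rw [eval_Dpoly]
      show (if π i = π i then ((i : ℕ) + 1 : ℂ) else 0) * (if π i = π i then 1 else 0) = _
      rw [if_pos rfl, if_pos rfl, mul_one]
    have hgeval : eval (coordsOf q₀) (gpoly π) ≠ 0 := by
      rw [gpoly, _root_.map_mul, map_prod, map_prod]
      apply mul_ne_zero
      · rw [Finset.prod_ne_zero_iff]
        intro i _
        rw [hD i]
        exact Nat.cast_add_one_ne_zero (i : ℕ)
      · rw [Finset.prod_ne_zero_iff]
        intro ipair hip
        rw [map_sub, hD, hD]
        have hne : ipair.1 ≠ ipair.2 := (Finset.mem_offDiag.1 hip).2.2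
        intro h
        apply hne
        have : ((ipair.1 : ℕ) : ℂ) = ((ipair.2 : ℕ) : ℂ) := by linear_combination h
        exact Fin.ext (Nat.cast_injective this)
    apply hgeval
    rw [← evalL hq₀L, h0, map_zero]
  -- Step 4: conclude.
  have hsplit : bind₁ (sigmaP π) f = 0 ∨ bind₁ (sigmaP π) (gpoly π) = 0 := by
    apply mul_eq_zero.1
    rw [← _root_.map_mul]
    exact hzero
  rcases hsplit with h | h
  · rw [← evalL hp, h, map_zero]
  · exact absurd h hgne

end Main

section Finrank

variable {m n : ℕ} (π : Fin m ↪ Fin n)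

/-- Parametrization of the linear subspace by `Fin m × Fin (n+1)`. -/
noncomputable def phiMap : ((Fin m × Fin (n + 1)) → ℂ) →ₗ[ℂ] LUSpace m n where
  toFun a :=
    ((fun i j => if π i ≤ j then a (i, j.succ) else 0 : Matrix (Fin m) (Fin n) ℂ),
     (fun j i => if j ≤ π i then a (i, j.castSucc) else 0 : Matrix (Fin n) (Fin m) ℂ))
  map_add' a b := by
    refine Prod.ext ?_ ?_ <;> funext x y <;> show _ = (_ : ℂ) + _ <;> dsimp <;> split <;> simp
  map_smul' r a := by
    refine Prod.ext ?_ ?_ <;> funext x y <;> show _ = r • (_ : ℂ) <;> dsimp <;> split <;> simp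

lemma phiMap_inj : Function.Injective (phiMap π) := by
  rw [injective_iff_map_eq_zero]
  intro a ha
  funext v
  obtain ⟨i, k⟩ := v
  show a (i, k) = 0
  rcases le_or_gt (k : ℕ) ((π i) : ℕ) with h | h
  · have hk : (k : ℕ) < n := lt_of_le_of_lt h (π i).isLt
    have h2 := congrArg (fun q : LUSpace m n => q.2 ⟨k, hk⟩ i) ha
    simp only [phiMap, LinearMap.coe_mk, AddHom.coe_mk] at h2
    rw [if_pos (show (⟨k, hk⟩ : Fin n) ≤ π i from h)] at h2
    rw [show ((⟨k, hk⟩ : Fin n).castSucc : Fin (n + 1)) = k from Fin.ext rfl] at h2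
    exact h2
  · have h1 : 1 ≤ (k : ℕ) := by omega
    have hk : (k : ℕ) - 1 < n := by omega
    have h2 := congrArg (fun q : LUSpace m n => q.1 i ⟨(k : ℕ) - 1, hk⟩) ha
    simp only [phiMap, LinearMap.coe_mk, AddHom.coe_mk] at h2
    rw [if_pos (show π i ≤ (⟨(k : ℕ) - 1, hk⟩ : Fin n) from by
      show ((π i) : ℕ) ≤ (k : ℕ) - 1
      omega)] at h2
    rw [show ((⟨(k : ℕ) - 1, hk⟩ : Fin n).succ : Fin (n + 1)) = k from Fin.ext (by
      show (k : ℕ) - 1 + 1 = (k : ℕ)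
      omega)] at h2
    exact h2

lemma phiMap_range : LinearMap.range (phiMap π) = linSubspace π := by
  apply le_antisymm
  · rintro p ⟨a, rfl⟩
    constructor
    · intro i j hj
      exact if_neg (not_le.2 hj)
    · intro i j hj
      exact if_neg (not_le.2 hj)
  · intro p hp
    refine ⟨fun v => if h : (v.2 : ℕ) ≤ ((π v.1) : ℕ)
        then p.2 ⟨(v.2 : ℕ), lt_of_le_of_lt h (π v.1).isLt⟩ v.1
        else p.1 v.1 ⟨(v.2 : ℕ) - 1, by omega⟩, ?_⟩
    obtain ⟨hp1, hp2⟩ := hp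
    refine Prod.ext ?_ ?_
    · funext i j
      show (if π i ≤ j then _ else 0) = p.1 i j
      rcases le_or_gt (π i) j with h | h
      · rw [if_pos h]
        rw [dif_neg (show ¬((j.succ : Fin (n+1)) : ℕ) ≤ ((π i) : ℕ) from by
          show ¬((j : ℕ) + 1 ≤ _)
          have : ((π i) : ℕ) ≤ (j : ℕ) := h
          omega)]
        exact congrArg (p.1 i) (Fin.ext (show (j : ℕ) + 1 - 1 = (j : ℕ) by omega))
      · rw [if_neg (not_le.2 h), hp1 i j h]
    · funext j i
      show (if j ≤ π i then _ else 0) = p.2 j i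
      rcases le_or_gt j (π i) with h | h
      · rw [if_pos h]
        rw [dif_pos (show ((j.castSucc : Fin (n+1)) : ℕ) ≤ ((π i) : ℕ) from h)]
        exact congrArg (fun jj => p.2 jj i) (Fin.ext rfl)
      · rw [if_neg (not_le.2 h), hp2 i j h]

lemma finrank_lin : Module.finrank ℂ (linSubspace π) = m * (n + 1) := by
  have e : ((Fin m × Fin (n + 1)) → ℂ) ≃ₗ[ℂ] linSubspace π :=
    (LinearEquiv.ofInjective (phiMap π) (phiMap_inj π)).trans
      (LinearEquiv.ofEq _ _ (phiMap_range π))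
  rw [← e.finrank_eq, Module.finrank_fintype_fun_eq_card, Fintype.card_prod,
    Fintype.card_fin, Fintype.card_fin]

end Finrank

/-- For decreasing `π`, `E_π` is the linear subspace cut out by `X_{ij} = 0` (`j < π(i)`) and
`Y_{ji} = 0` (`j > π(i)`), of dimension `m(n+1)`. -/
theorem Epi_decreasing (m n : ℕ) (hm : 1 ≤ m) (hmn : m ≤ n) (π : Fin m ↪ Fin n)
    (hdec : ∀ i i' : Fin m, i < i' → π i' < π i) :
    Ecomp π = (linSubspace π : Set (LUSpace m n)) ∧
    Module.finrank ℂ (linSubspace π) = m * (n + 1) := by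
  exact ⟨Set.Subset.antisymm (ecomp_subset_lin hdec) (lin_subset_ecomp hdec), finrank_lin π⟩
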